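/- Let H1, H2 be Hilbert spaces, L : H1 → H2 a bounded linear operator, and h ∈ H2. Then h lies in the range of L if and only if there exists a constant C > 0 such that |⟨h, g⟩| ≤ C ‖L* g‖ for all g ∈ H2. -/

import Mathlib

/-- Range characterization via the adjoint: `h ∈ range L` iff
`|⟨h, g⟩| ≤ C ‖L* g‖` for some `C > 0` and all `g`. -/
theorem stmt_0 {H1 H2 : Type*}
    [NormedAddCommGroup H1] [InnerProductSpace ℝ H1] [CompleteSpace H1]
    [NormedAddCommGroup H2] [InnerProductSpace ℝ H2] [CompleteSpace H2]
    (L : H1 →L[ℝ] H2) (h : H2) :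
    h ∈ Set.range L ↔
      ∃ C > 0, ∀ g : H2, |(inner ℝ h g : ℝ)| ≤ C * ‖ContinuousLinearMap.adjoint L g‖ := by
  set A := ContinuousLinearMap.adjoint L with hA
  constructor
  · rintro ⟨f, rfl⟩
    refine ⟨‖f‖ + 1, by positivity, fun g => ?_⟩
    have e1 : (inner ℝ (L f) g : ℝ) = inner ℝ f (A g) :=
      (ContinuousLinearMap.adjoint_inner_right L f g).symm
    rw [e1]
    calc |(inner ℝ f (A g) : ℝ)| ≤ ‖f‖ * ‖A g‖ := abs_real_inner_le_norm f (A g)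
      _ ≤ (‖f‖ + 1) * ‖A g‖ := by
          apply mul_le_mul_of_nonneg_right (by linarith) (norm_nonneg _)
  · rintro ⟨C, hC, hbound⟩
    set B : H2 →ₗ[ℝ] H1 := A.toLinearMap with hB
    set p : Submodule ℝ H1 := LinearMap.range B with hp
    -- the functional g ↦ ⟪h, g⟫ kills ker B
    have hker : LinearMap.ker B ≤ LinearMap.ker ((innerSL ℝ h : H2 →L[ℝ] ℝ).toLinearMap) := by
      intro g hg
      have hg' : A g = 0 := hg
      have := hbound g
      rw [hg', norm_zero, mul_zero] at this
      have : (inner ℝ h g : ℝ) = 0 := abs_nonpos_iff.mp this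
      simpa using this
    -- induced functional on range B
    let φ₀ : p →ₗ[ℝ] ℝ :=
      ((LinearMap.ker B).liftQ ((innerSL ℝ h : H2 →L[ℝ] ℝ).toLinearMap) hker).comp
        (B.quotKerEquivRange.symm : p →ₗ[ℝ] (H2 ⧸ LinearMap.ker B))
    have hφ₀ : ∀ g : H2, ∀ hg : B g ∈ p, φ₀ ⟨B g, hg⟩ = inner ℝ h g := by
      intro g hg
      show ((LinearMap.ker B).liftQ ((innerSL ℝ h : H2 →L[ℝ] ℝ).toLinearMap) hker)
        (B.quotKerEquivRange.symm ⟨B g, hg⟩) = inner ℝ h g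
      rw [LinearMap.quotKerEquivRange_symm_apply_image B g hg]
      simp
    have hφ₀bound : ∀ x : p, ‖φ₀ x‖ ≤ C * ‖x‖ := by
      rintro ⟨x, hx⟩
      obtain ⟨g, rfl⟩ := hx
      rw [hφ₀ g ⟨g, rfl⟩, Real.norm_eq_abs]
      exact hbound g
    let φ : p →L[ℝ] ℝ := φ₀.mkContinuous C hφ₀bound
    set K : Submodule ℝ H1 := p.topologicalClosure with hK
    haveI : CompleteSpace K := (Submodule.isClosed_topologicalClosure p).completeSpace_coe
    let ι : p →ₗ[ℝ] K := Submodule.inclusion p.le_topologicalClosure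
    have hiso : Isometry ι := AddMonoidHomClass.isometry_of_norm ι (fun x => rfl)
    let e : p →L[ℝ] K := ⟨ι, hiso.continuous⟩
    have hdense : DenseRange e := by
      intro y
      have h1 : (Subtype.val '' Set.range e : Set H1) = (p : Set H1) := by
        ext x; constructor
        · rintro ⟨z, ⟨w, rfl⟩, rfl⟩; exact w.2
        · rintro hx; exact ⟨e ⟨x, hx⟩, ⟨⟨x, hx⟩, rfl⟩, rfl⟩
      have h2 : (y : H1) ∈ closure (p : Set H1) := y.2
      rw [closure_subtype, h1]
      exact h2
    let ψ : K →L[ℝ] ℝ := φ.extend e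
    have hψ : ∀ x : p, ψ (e x) = φ x := fun x =>
      ContinuousLinearMap.extend_eq φ hdense hiso.isUniformInducing x
    let f₀ : K := (InnerProductSpace.toDual ℝ K).symm ψ
    have hf₀ : ∀ x : K, (inner ℝ f₀ x : ℝ) = ψ x := fun x =>
      InnerProductSpace.toDual_symm_apply
    refine ⟨(f₀ : H1), ?_⟩
    apply ext_inner_right ℝ
    intro g
    have hgp : A g ∈ p := ⟨g, rfl⟩
    have hgK : A g ∈ K := p.le_topologicalClosure hgp
    have e2 : (inner ℝ (L (f₀ : H1)) g : ℝ) = inner ℝ ((f₀ : H1)) (A g) :=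
      (ContinuousLinearMap.adjoint_inner_right L _ g).symm
    have e3 : (inner ℝ ((f₀ : H1)) (A g) : ℝ) = inner ℝ f₀ (⟨A g, hgK⟩ : K) := rfl
    have e4 : (⟨A g, hgK⟩ : K) = e ⟨A g, hgp⟩ := rfl
    rw [e2, e3, hf₀, e4, hψ]
    have : φ (⟨A g, hgp⟩ : p) = φ₀ ⟨A g, hgp⟩ := rfl
    rw [this]
    exact hφ₀ g hgp
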